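/- arXiv:2603.12283 — 4 statements merged into one kernel-verified Lean document; each statement's English description precedes it below -/
import Mathlib

section
/- The self-cycle composition of a completely positive map is completely positive: if M_{AB|CD}: L(H_C ⊗ H_D) → L(H_A ⊗ H_B) is completely positive and H_A ≅ H_C, then ⨆_{A,C}(M_{AB|CD}): L(H_D) → L(H_B) is completely positive. -/
open scoped BigOperators Matrix Kronecker ComplexOrder
open Matrix

noncomputable section

/-- Superoperators between matrix algebras. -/
abbrev SupOp (a b : ℕ) := Matrix (Fin a) (Fin a) ℂ →ₗ[ℂ] Matrix (Fin b) (Fin b) ℂ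

/-- The Choi–Jamiołkowski operator of a superoperator,
`CJ(E) = (E ⊗ I)(|Φ⁺⟩⟨Φ⁺|)` with the normalised maximally entangled state. -/
def CJ {a b : ℕ} (E : SupOp a b) : Matrix (Fin a × Fin b) (Fin a × Fin b) ℂ :=
  Matrix.of fun p q => ((a : ℂ))⁻¹ * E (Matrix.single p.1 q.1 1) p.2 q.2

/-- The inverse Choi–Jamiołkowski map,
`CJ⁻¹(M)(ρ) = d_A Tr_{A'}(T_{A'|A}(ρ) M)` with `T_{A'|A}(ρ) = Σ_{i,j} |i⟩⟨j| ⟨j|ρ|i⟩`. -/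
def CJinv {a b : ℕ} (M : Matrix (Fin a × Fin b) (Fin a × Fin b) ℂ)
    (ρ : Matrix (Fin a) (Fin a) ℂ) : Matrix (Fin b) (Fin b) ℂ :=
  Matrix.of fun k l => (a : ℂ) * ∑ i, ∑ j, ρ j i * M (j, k) (i, l)

/-- Complete positivity: every identity-amplification maps positive semidefinite
matrices to positive semidefinite matrices. -/
def IsCPfun {ι κ : Type*} [Fintype ι] [DecidableEq ι] [Fintype κ] [DecidableEq κ]
    (E : Matrix ι ι ℂ → Matrix κ κ ℂ) : Prop :=
  ∀ n : ℕ, ∀ X : Matrix (ι × Fin n) (ι × Fin n) ℂ, X.PosSemidef →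
    (Matrix.of fun p q => E (Matrix.of fun i j => X (i, p.2) (j, q.2)) p.1 q.1 :
      Matrix (κ × Fin n) (κ × Fin n) ℂ).PosSemidef

/-- Trace preservation. -/
def IsTPfun {ι κ : Type*} [Fintype ι] [Fintype κ]
    (E : Matrix ι ι ℂ → Matrix κ κ ℂ) : Prop :=
  ∀ ρ, (E ρ).trace = ρ.trace

/-- The self-cycle composition over the (last) ancilla system `A` (of dimension `a`):
`⨆_A(E)(ρ) = Σ_{k,l} ⟨k|_A E(ρ ⊗ |k⟩⟨l|_A)|l⟩_A`. -/
def selfCycleA {σ τ : Type*} [Fintype σ] [DecidableEq σ] [Fintype τ] [DecidableEq τ] {a : ℕ}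
    (E : Matrix (σ × Fin a) (σ × Fin a) ℂ → Matrix (τ × Fin a) (τ × Fin a) ℂ)
    (ρ : Matrix σ σ ℂ) : Matrix τ τ ℂ :=
  Matrix.of fun s t => ∑ k, ∑ l,
    E (Matrix.of fun i j => ρ i.1 j.1 * (if i.2 = k ∧ j.2 = l then 1 else 0)) (s, k) (t, l)

/-- The full (scalar) self-cycle of a map with isomorphic input and output:
`⨆(M) = Σ_{j,k} ⟨j| M(|j⟩⟨k|) |k⟩`. -/
def fullSC {σ : Type*} [Fintype σ] [DecidableEq σ]
    (E : Matrix σ σ ℂ → Matrix σ σ ℂ) : ℂ :=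
  ∑ j, ∑ k, E (Matrix.single j k 1) j k

/-- The un-normalised maximally entangled vector `|Ω⁺⟩ = Σ_i |i⟩|i⟩`. -/
def omegaKet (d : ℕ) : Fin d × Fin d → ℂ := fun p => if p.1 = p.2 then 1 else 0

/-- the self-cycle composition `⨆_{A,C}` (looping the first factor `A ≅ C`
of dimension `a`) of a completely positive map is completely positive. -/
theorem stmt3 (a b d : ℕ)
    (M : Matrix (Fin a × Fin d) (Fin a × Fin d) ℂ →ₗ[ℂ]
         Matrix (Fin a × Fin b) (Fin a × Fin b) ℂ)
    (hM : IsCPfun ⇑M) :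
    IsCPfun (fun ρ : Matrix (Fin d) (Fin d) ℂ =>
      (Matrix.of fun s t => ∑ k, ∑ l,
        M (Matrix.of fun i j =>
            (if i.1 = k then 1 else 0) * (if j.1 = l then 1 else 0) * ρ i.2 j.2)
          (k, s) (l, t) : Matrix (Fin b) (Fin b) ℂ)) := by
  intro n X hX
  set e : Fin a × Fin n ≃ Fin (a * n) := finProdFinEquiv with he
  -- C embeds X into the "entangled" bigger matrix
  set C : Matrix (Fin d × Fin n) ((Fin a × Fin d) × (Fin a × Fin n)) ℂ :=
    Matrix.of (fun R S => (if S.1.2 = R.1 then 1 else 0) * (if S.2.2 = R.2 then 1 else 0)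
      * (if S.1.1 = S.2.1 then 1 else 0)) with hC
  have hX1 : (Cᴴ * X * C).PosSemidef := hX.conjTranspose_mul_mul_same C
  have hX1e : ∀ (i k : Fin a) (u : Fin d) (p : Fin n) (j l : Fin a) (v : Fin d) (q : Fin n),
      (Cᴴ * X * C) ((i,u),(k,p)) ((j,v),(l,q))
        = (if i = k then 1 else 0) * (if j = l then 1 else 0) * X (u,p) (v,q) := by
    intro i k u p j l v q
    simp only [Matrix.mul_apply, Matrix.conjTranspose_apply, hC, Matrix.of_apply]
    simp only [Fintype.sum_prod_type, ite_mul, mul_ite, one_mul, zero_mul, mul_one, mul_zero,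
      apply_ite (starRingEnd ℂ), _root_.map_one, _root_.map_zero, Finset.sum_ite_eq, Finset.sum_ite_eq',
      Finset.mem_univ, if_true]
    split_ifs <;> simp [apply_ite (starRingEnd ℂ), Finset.sum_ite_eq]
  -- reindex the ancilla to Fin (a*n)
  set f : (Fin a × Fin d) × Fin (a * n) → (Fin a × Fin d) × (Fin a × Fin n) :=
    fun P => (P.1, e.symm P.2) with hf
  have hX2 : ((Cᴴ * X * C).submatrix f f).PosSemidef := hX1.submatrix f
  -- apply complete positivity of M
  have hY2 := hM (a * n) _ hX2
  set Y2 : Matrix ((Fin a × Fin b) × Fin (a * n)) ((Fin a × Fin b) × Fin (a * n)) ℂ :=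
    Matrix.of fun p q =>
      M (Matrix.of fun i j => ((Cᴴ * X * C).submatrix f f) (i, p.2) (j, q.2)) p.1 q.1 with hY2d
  -- compress with D
  set D : Matrix ((Fin a × Fin b) × Fin (a * n)) (Fin b × Fin n) ℂ :=
    Matrix.of (fun R T => (if R.1.2 = T.1 then 1 else 0)
      * (if R.2 = e (R.1.1, T.2) then 1 else 0)) with hD
  have key : (Dᴴ * Y2 * D).PosSemidef := hY2.conjTranspose_mul_mul_same D
  have hARG : ∀ (k : Fin a) (p : Fin n) (l : Fin a) (q : Fin n),
      (Matrix.of fun i j => ((Cᴴ * X * C).submatrix f f) (i, e (k,p)) (j, e (l,q))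
        : Matrix (Fin a × Fin d) (Fin a × Fin d) ℂ)
      = Matrix.of fun i j => ((if i.1 = k then 1 else 0) * if j.1 = l then 1 else 0)
          * X (i.2,p) (j.2,q) := by
    intro k p l q
    ext ij kl
    simp only [Matrix.of_apply, Matrix.submatrix_apply, hf, Equiv.symm_apply_apply]
    exact hX1e ij.1 k ij.2 p kl.1 l kl.2 q
  have hY2e : ∀ (k : Fin a) (s : Fin b) (p : Fin n) (l : Fin a) (t : Fin b) (q : Fin n),
      Y2 ((k,s), e (k,p)) ((l,t), e (l,q))
        = M (Matrix.of fun i j => ((if i.1 = k then 1 else 0) * if j.1 = l then 1 else 0)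
            * X (i.2,p) (j.2,q)) (k,s) (l,t) := by
    intro k s p l t q
    rw [hY2d]
    show M _ _ _ = _
    rw [hARG k p l q]
  convert key using 1
  ext P Q
  have hRHS : (Dᴴ * Y2 * D) P Q
      = ∑ k, ∑ l, Y2 ((k, P.1), e (k, P.2)) ((l, Q.1), e (l, Q.2)) := by
    simp only [Matrix.mul_apply, Matrix.conjTranspose_apply, hD, Matrix.of_apply]
    simp only [Fintype.sum_prod_type, ite_mul, mul_ite, one_mul, zero_mul, mul_one, mul_zero,
      apply_ite (starRingEnd ℂ), _root_.map_one, _root_.map_zero, Finset.sum_ite_eq,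
      Finset.sum_ite_eq', Finset.mem_univ, if_true, star_one, star_zero,
      apply_ite (star : ℂ → ℂ)]
    exact Finset.sum_comm
  rw [hRHS]
  simp only [Matrix.of_apply]
  exact Finset.sum_congr rfl fun k _ => Finset.sum_congr rfl fun l _ =>
    (hY2e k P.1 P.2 l Q.1 Q.2).symm
end
end

section
/- For any nonzero linear operator Ĉ: H_{S₁} → H_{S₂} between finite-dimensional Hilbert spaces with dim H_{S₁} ≤ dim H_{S₂}, there exists an ancilla Hilbert space H_A ≅ H_{S₁} ⊗ ℂ², an isometry V: H_{S₁} ⊗ H_A → H_{S₂} ⊗ H_A, and a real constant α > 0 such that Ĉ = α ⟨Ω⁺|_{AA'} V |Ω⁺⟩_{AA'}, where |Ω⁺⟩_{AA'} = Σ_k |k⟩_A |k⟩_{A'} is the un-normalised maximally entangled state on two copies of H_A and the partial inner product loops the ancilla. -/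
open scoped BigOperators Matrix Kronecker ComplexOrder
open Matrix

noncomputable section

lemma norm_le_sum_abs' {n : ℕ} (x : EuclideanSpace ℂ (Fin n)) :
    ‖x‖ ≤ ∑ i, ‖x i‖ := by
  rw [EuclideanSpace.norm_eq]
  have hnn : (0:ℝ) ≤ ∑ i, ‖x i‖ :=
    Finset.sum_nonneg fun i _ => norm_nonneg _
  have h1 : (∑ i, ‖x i‖ ^ 2) ≤ (∑ i, ‖x i‖) * (∑ i, ‖x i‖) := by
    rw [Finset.sum_mul]
    refine Finset.sum_le_sum fun i _ => ?_
    have hle : ‖x i‖ ≤ ∑ j, ‖x j‖ :=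
      Finset.single_le_sum (fun j _ => norm_nonneg _) (Finset.mem_univ i)
    calc ‖x i‖ ^ 2 = ‖x i‖ * ‖x i‖ := by rw [sq]
      _ ≤ ‖x i‖ * (∑ j, ‖x j‖) :=
        mul_le_mul_of_nonneg_left hle (norm_nonneg _)
  calc Real.sqrt (∑ i, ‖x i‖ ^ 2)
      ≤ Real.sqrt ((∑ i, ‖x i‖) * (∑ i, ‖x i‖)) :=
        Real.sqrt_le_sqrt h1
    _ = ∑ i, ‖x i‖ := Real.sqrt_mul_self hnn

lemma exists_onb' {n : ℕ} (i0 : Fin n) (u : EuclideanSpace ℂ (Fin n)) (hu : ‖u‖ = 1) :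
    ∃ b : OrthonormalBasis (Fin n) ℂ (EuclideanSpace ℂ (Fin n)), b i0 = u := by
  have card : Module.finrank ℂ (EuclideanSpace ℂ (Fin n)) = Fintype.card (Fin n) := by
    simp
  have hv : Orthonormal ℂ (({i0} : Set (Fin n)).restrict (fun _ => u)) := by
    rw [orthonormal_iff_ite]
    rintro ⟨i, hi⟩ ⟨j, hj⟩
    have : i = j := by
      rw [Set.mem_singleton_iff] at hi hj; rw [hi, hj]
    subst this
    simp [Set.restrict, inner_self_eq_norm_sq_to_K, hu]
  obtain ⟨b, hb⟩ := hv.exists_orthonormalBasis_extension_of_card_eq card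
  exact ⟨b, hb i0 rfl⟩

/-- any nonzero operator `Ĉ : H_{S₁} → H_{S₂}` (with `d₁ ≤ d₂`) arises,
up to a positive constant `α`, from looping the ancilla `A ≅ H_{S₁} ⊗ ℂ²` of an
isometry `V : H_{S₁} ⊗ H_A → H_{S₂} ⊗ H_A`:
`Ĉ = α ⟨Ω⁺|_{AA'} V |Ω⁺⟩_{AA'} = α Σ_k ⟨k|_A V |k⟩_A`. -/
theorem stmt12 (d1 d2 : ℕ) (hle : d1 ≤ d2)
    (Chat : Matrix (Fin d2) (Fin d1) ℂ) (h : Chat ≠ 0) :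
    ∃ (α : ℝ) (V : Matrix (Fin d2 × (Fin d1 × Fin 2)) (Fin d1 × (Fin d1 × Fin 2)) ℂ),
      0 < α ∧ Vᴴ * V = 1 ∧
      ∀ m i, Chat m i = (α : ℂ) * ∑ k, V (m, k) (i, k) := by
  classical
  have hd1 : 0 < d1 := by
    rcases Nat.eq_zero_or_pos d1 with h0 | h0
    · subst h0; exact absurd (by ext m i; exact i.elim0) h
    · exact h0
  have hd2 : 0 < d2 := lt_of_lt_of_le hd1 hle
  set T : ℝ := ∑ q : Fin d1, ∑ m : Fin d2, ‖Chat m q‖ with hT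
  have hT0 : 0 ≤ T :=
    Finset.sum_nonneg fun q _ => Finset.sum_nonneg fun m _ => norm_nonneg _
  set c : ℝ := (1 + T)⁻¹ with hc
  have hcpos : 0 < c := inv_pos.mpr (by linarith)
  set z : Fin d1 → EuclideanSpace ℂ (Fin d2) :=
    fun q => (WithLp.toLp 2 (fun m => (c : ℂ) * Chat m q) : EuclideanSpace ℂ (Fin d2)) with hzdef
  have hzapp : ∀ q m, z q m = (c : ℂ) * Chat m q := fun q m => rfl
  set r : Fin d1 → ℝ := fun q => ‖z q‖ with hrdef
  have hr0 : ∀ q, 0 ≤ r q := fun q => norm_nonneg _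
  have hr1 : ∀ q, r q ≤ 1 := by
    intro q
    have h1 : ‖z q‖ ≤ ∑ m, ‖z q m‖ := norm_le_sum_abs' _
    have h2 : ∑ m, ‖z q m‖ = c * ∑ m, ‖Chat m q‖ := by
      rw [Finset.mul_sum]
      refine Finset.sum_congr rfl fun m _ => ?_
      rw [hzapp, norm_mul, Complex.norm_real, Real.norm_eq_abs, abs_of_pos hcpos]
    have h3 : ∑ m, ‖Chat m q‖ ≤ T :=
      Finset.single_le_sum (f := fun q => ∑ m, ‖Chat m q‖)
        (fun q _ => Finset.sum_nonneg fun m _ => norm_nonneg _) (Finset.mem_univ q)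
    have h4 : c * ∑ m, ‖Chat m q‖ ≤ c * (1 + T) := by
      apply mul_le_mul_of_nonneg_left _ hcpos.le
      linarith
    have h5 : c * (1 + T) = 1 := inv_mul_cancel₀ (by linarith)
    calc r q ≤ ∑ m, ‖z q m‖ := h1
      _ = c * ∑ m, ‖Chat m q‖ := h2
      _ ≤ c * (1 + T) := h4
      _ = 1 := h5
  set u : Fin d1 → EuclideanSpace ℂ (Fin d2) :=
    fun q => if hq : z q = 0 then EuclideanSpace.single ⟨0, hd2⟩ 1 else ‖z q‖⁻¹ • z q with hudef
  have hu1 : ∀ q, ‖u q‖ = 1 := by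
    intro q
    by_cases hq : z q = 0
    · simp only [hudef, dif_pos hq]
      rw [EuclideanSpace.norm_single]; norm_num
    · simp only [hudef, dif_neg hq]
      exact norm_smul_inv_norm hq
  have hzu : ∀ q, z q = (r q : ℝ) • u q := by
    intro q
    by_cases hq : z q = 0
    · simp only [hudef, dif_pos hq, hrdef, hq]
      simp
    · simp only [hudef, dif_neg hq, hrdef]
      rw [smul_smul, mul_inv_cancel₀ (norm_ne_zero_iff.mpr hq), one_smul]
  -- tau
  set τ : Fin d1 → ℝ := fun q => Real.sqrt (1 - (r q / 2) ^ 2) with hτdef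
  have hτ : ∀ q, (τ q) ^ 2 = 1 - (r q / 2) ^ 2 := by
    intro q
    rw [hτdef]
    exact Real.sq_sqrt (by nlinarith [hr0 q, hr1 q])
  -- orthonormal bases
  have hbas : ∀ q : Fin d1, ∃ b : OrthonormalBasis (Fin d2) ℂ (EuclideanSpace ℂ (Fin d2)),
      b ⟨0, hd2⟩ = u q := fun q => exists_onb' _ _ (hu1 q)
  choose b hb using hbas
  -- index embedding
  set φ : Fin d1 → Fin d1 → Fin d2 := fun q i =>
    if _hiq : (i : ℕ) < (q : ℕ) then ⟨(i : ℕ) + 1, by omega⟩ else ⟨(i : ℕ), by omega⟩ with hφdef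
  have hφ0 : ∀ q i, i ≠ q → φ q i ≠ ⟨0, hd2⟩ := by
    intro q i hiq
    have hne : (i : ℕ) ≠ (q : ℕ) := fun hh => hiq (Fin.ext hh)
    apply Fin.ne_of_val_ne
    simp only [hφdef]
    split <;> simp <;> omega
  have hφinj : ∀ q i i', i ≠ q → i' ≠ q → φ q i = φ q i' → i = i' := by
    intro q i i' hi hi' heq
    have h1 : (i : ℕ) ≠ (q : ℕ) := fun hh => hi (Fin.ext hh)
    have h2 : (i' : ℕ) ≠ (q : ℕ) := fun hh => hi' (Fin.ext hh)
    have := Fin.val_eq_of_eq heq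
    simp only [hφdef] at this
    apply Fin.ext
    split at this <;> split at this <;> simp at this <;> omega
  -- columns
  set col : Fin d1 → Fin d1 → Fin 2 → Fin 2 → EuclideanSpace ℂ (Fin d2) := fun q i t s =>
    if i = q then
      (if s = t then ((r q / 2 : ℝ) : ℂ) • u q else (Complex.I * ((τ q : ℝ) : ℂ)) • u q)
    else
      (if s = t then 0 else b q (φ q i)) with hcoldef
  have hbo : ∀ q (j k : Fin d2), (inner ℂ (b q j) (b q k) : ℂ) = if j = k then 1 else 0 :=
    fun q => orthonormal_iff_ite.mp (b q).orthonormal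
  have huu : ∀ q, (inner ℂ (u q) (u q) : ℂ) = 1 := by
    intro q; rw [← hb q, hbo]; simp
  have huv : ∀ q i, i ≠ q → (inner ℂ (u q) (b q (φ q i)) : ℂ) = 0 := by
    intro q i hi
    rw [← hb q, hbo, if_neg (Ne.symm (hφ0 q i hi))]
  have hvu : ∀ q i, i ≠ q → (inner ℂ (b q (φ q i)) (u q) : ℂ) = 0 := by
    intro q i hi
    rw [← hb q, hbo, if_neg (hφ0 q i hi)]
  have hrτC : ∀ q, ((r q : ℂ) / 2) ^ 2 + ((τ q : ℝ) : ℂ) ^ 2 = 1 := by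
    intro q
    have hR : (r q / 2) ^ 2 + (τ q) ^ 2 = 1 := by have := hτ q; linarith
    calc ((r q : ℂ) / 2) ^ 2 + ((τ q : ℝ) : ℂ) ^ 2
        = (((r q / 2) ^ 2 + (τ q) ^ 2 : ℝ) : ℂ) := by push_cast; ring
      _ = 1 := by rw [hR]; norm_num
  have hinner : ∀ q (i i' : Fin d1) (t t' : Fin 2),
      ((inner ℂ (col q i t 0) (col q i' t' 0) : ℂ) + (inner ℂ (col q i t 1) (col q i' t' 1) : ℂ))
        = if i = i' ∧ t = t' then 1 else 0 := by
    intro q i i' t t'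
    by_cases hi : i = q <;> by_cases hi' : i' = q
    · fin_cases t <;> fin_cases t' <;>
        simp [hcoldef, hi, hi', inner_smul_left, inner_smul_right, huu, _root_.map_mul, -inner_self_eq_norm_sq_to_K,
          map_ofNat, Complex.conj_ofReal, Complex.conj_I]
      all_goals
        first
        | ring1
        | linear_combination hrτC q - ((τ q : ℝ) : ℂ) ^ 2 * Complex.I_sq
    · have hne : ¬ ((q : Fin d1) = i') := fun he => hi' he.symm
      fin_cases t <;> fin_cases t' <;>
        simp [hcoldef, hi, hi', hne, inner_smul_left, inner_smul_right, huv _ _ hi']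
    · have hne : ¬ (i = (q : Fin d1)) := hi
      fin_cases t <;> fin_cases t' <;>
        simp [hcoldef, hi, hi', hne, inner_smul_left, inner_smul_right, hvu _ _ hi]
    · have hiff : (φ q i = φ q i') ↔ (i = i') :=
        ⟨hφinj q i i' hi hi', fun he => he ▸ rfl⟩
      fin_cases t <;> fin_cases t' <;>
        simp [hcoldef, hi, hi', hbo, hiff]
  -- the isometry
  set V : Matrix (Fin d2 × (Fin d1 × Fin 2)) (Fin d1 × (Fin d1 × Fin 2)) ℂ :=
    Matrix.of (fun rr cc => if rr.2.1 = cc.2.1 then col cc.2.1 cc.1 cc.2.2 rr.2.2 rr.1 else 0)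
    with hV
  have hinnerexp : ∀ (x y : EuclideanSpace ℂ (Fin d2)),
      (inner ℂ x y : ℂ) = ∑ m, star (x m) * y m := by
    intro x y
    simp [PiLp.inner_apply, RCLike.inner_apply, RCLike.star_def, mul_comm]
  refine ⟨1 + T, V, by linarith, ?_, ?_⟩
  · ext ⟨i, q, t⟩ ⟨i', q', t'⟩
    rw [Matrix.mul_apply, Matrix.one_apply]
    simp only [conjTranspose_apply, hV, Matrix.of_apply]
    rw [Fintype.sum_prod_type]
    simp only [Fintype.sum_prod_type]
    by_cases hqq : q = q'
    · subst hqq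
      have hrhs : ((i, (q, t)) = (i', (q, t'))) ↔ (i = i' ∧ t = t') := by
        simp [Prod.ext_iff]
      calc (∑ m : Fin d2, ∑ p : Fin d1, ∑ s : Fin 2,
              star (if p = q then col q i t s m else 0) *
                (if p = q then col q i' t' s m else 0))
          = ∑ m : Fin d2, ∑ s : Fin 2, star (col q i t s m) * col q i' t' s m := by
            refine Finset.sum_congr rfl fun m _ => ?_
            rw [Finset.sum_comm]
            refine Finset.sum_congr rfl fun s _ => ?_
            have : ∀ p : Fin d1,
                star (if p = q then col q i t s m else 0) *
                  (if p = q then col q i' t' s m else 0)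
                = if p = q then star (col q i t s m) * col q i' t' s m else 0 := by
              intro p; by_cases hp : p = q <;> simp [hp]
            simp only [this]
            rw [Finset.sum_ite_eq' Finset.univ q
              (fun _ => star (col q i t s m) * col q i' t' s m)]
            simp
        _ = ∑ s : Fin 2, ∑ m : Fin d2, star (col q i t s m) * col q i' t' s m :=
            Finset.sum_comm
        _ = (inner ℂ (col q i t 0) (col q i' t' 0) : ℂ) +
              (inner ℂ (col q i t 1) (col q i' t' 1) : ℂ) := by
            rw [Fin.sum_univ_two, hinnerexp, hinnerexp]
        _ = if i = i' ∧ t = t' then 1 else 0 := hinner q i i' t t'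
        _ = if (i, (q, t)) = (i', (q, t')) then 1 else 0 := by
            by_cases hcond : i = i' ∧ t = t'
            · rw [if_pos hcond, if_pos (hrhs.mpr hcond)]
            · rw [if_neg hcond, if_neg (fun hh => hcond (hrhs.mp hh))]
    · rw [if_neg (by simp [Prod.ext_iff, hqq])]
      refine Finset.sum_eq_zero fun m _ => Finset.sum_eq_zero fun p _ =>
        Finset.sum_eq_zero fun s _ => ?_
      by_cases hp : p = q
      · rw [if_neg (show ¬ p = q' from hp ▸ hqq), mul_zero]
      · rw [if_neg hp, star_zero, zero_mul]
  · intro m i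
    have hcolapp : ∀ (q' : Fin d1) (t : Fin 2),
        col q' i t t m = if i = q' then ((r q' / 2 : ℝ) : ℂ) * u q' m else 0 := by
      intro q' t
      by_cases hiq : i = q'
      · simp [hcoldef, hiq, PiLp.smul_apply, smul_eq_mul]
      · simp [hcoldef, hiq]
    have hVdiag : ∀ (k : Fin d1 × Fin 2), V (m, k) (i, k) = col k.1 i k.2 k.2 m := by
      intro k; simp [hV]
    have hsum : (∑ k : Fin d1 × Fin 2, V (m, k) (i, k)) = (c : ℂ) * Chat m i := by
      rw [Fintype.sum_prod_type]
      simp only [hVdiag, hcolapp]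
      rw [← hzapp i]
      rw [hzu i]
      simp [Fin.sum_univ_two, Finset.sum_add_distrib, Finset.sum_ite_eq,
        PiLp.smul_apply, Complex.real_smul]
      ring
    rw [hsum]
    have hαc : ((1 + T : ℝ) : ℂ) * (c : ℂ) = 1 := by
      rw [← Complex.ofReal_mul, mul_inv_cancel₀ (by linarith : (1 : ℝ) + T ≠ 0)]
      norm_num
    calc Chat m i = (((1 + T : ℝ) : ℂ) * (c : ℂ)) * Chat m i := by rw [hαc, one_mul]
      _ = ((1 + T : ℝ) : ℂ) * ((c : ℂ) * Chat m i) := by ring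
end
end

section
/- Let P ∈ L(H_{S₁} ⊗ H_{S₂}) be a density operator (positive, trace one). Then there exist a finite-dimensional ancilla H_A with dim H_A = 2·dim H_{S₁}, a CPTP map E: L(H_{S₁} ⊗ H_A) → L(H_{S₂} ⊗ H_A), and a real constant α > 0 such that CJ⁻¹_{S₂|S₁}(P) = α · ⨆_A(E), where ⨆_A denotes the self-cycle composition over the ancilla A. -/
open scoped BigOperators Matrix Kronecker ComplexOrder
open Matrix

noncomputable section

/-! ### Auxiliary lemmas -/

section
open scoped MatrixOrder

def Matrix.PosSemidef.sqrt {n : Type*} [Fintype n] [DecidableEq n] {A : Matrix n n ℂ}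
    (_ : A.PosSemidef) : Matrix n n ℂ := CFC.sqrt A

lemma Matrix.PosSemidef.posSemidef_sqrt {n : Type*} [Fintype n] [DecidableEq n]
    {A : Matrix n n ℂ} (hA : A.PosSemidef) : hA.sqrt.PosSemidef :=
  (CFC.sqrt_nonneg A).posSemidef

lemma Matrix.PosSemidef.sqrt_mul_self {n : Type*} [Fintype n] [DecidableEq n]
    {A : Matrix n n ℂ} (hA : A.PosSemidef) : hA.sqrt * hA.sqrt = A :=
  CFC.sqrt_mul_sqrt_self A hA.nonneg

end

set_option maxHeartbeats 1000000 in
lemma star_dot_self' {n : Type*} [Fintype n] (v : n → ℂ) :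
    star v ⬝ᵥ v = ((∑ i, Complex.normSq (v i) : ℝ) : ℂ) := by
  simp [dotProduct, Complex.normSq_eq_conj_mul_self, Pi.star_apply]

set_option maxHeartbeats 1000000 in
lemma one_sub_psd {n : Type*} [Fintype n] [DecidableEq n] {Q : Matrix n n ℂ}
    (hQ : Q.PosSemidef) (htrQ : Q.trace = 1) : (1 - Q).PosSemidef := by
  set B := hQ.sqrt with hBdef
  have hBH : Bᴴ = B := hQ.posSemidef_sqrt.1
  have hBB : B * B = Q := hQ.sqrt_mul_self
  have hBji : ∀ i j, B j i = (starRingEnd ℂ) (B i j) := fun i j => by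
    conv_lhs => rw [← hBH]
    simp [conjTranspose_apply]
  have htrB : (∑ i, ∑ j, Complex.normSq (B i j)) = 1 := by
    have h1 : Q.trace = ((∑ i, ∑ j, Complex.normSq (B i j) : ℝ) : ℂ) := by
      rw [← hBB]
      simp only [Matrix.trace, diag_apply, mul_apply]
      push_cast
      refine Finset.sum_congr rfl fun i _ => Finset.sum_congr rfl fun j _ => ?_
      rw [hBji i j, Complex.normSq_eq_conj_mul_self]
      ring
    rw [htrQ] at h1
    exact_mod_cast h1.symm
  refine .of_dotProduct_mulVec_nonneg (isHermitian_one.sub hQ.1) fun x => ?_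
  have key : star x ⬝ᵥ (1 - Q) *ᵥ x
      = ((∑ j, Complex.normSq (x j) - ∑ i, Complex.normSq ((B *ᵥ x) i) : ℝ) : ℂ) := by
    rw [sub_mulVec, one_mulVec, dotProduct_sub]
    have h2 : star x ⬝ᵥ Q *ᵥ x = star (B *ᵥ x) ⬝ᵥ (B *ᵥ x) := by
      rw [← hBB, ← mulVec_mulVec, dotProduct_mulVec, star_mulVec, hBH]
      all_goals rw [dotProduct_mulVec]
    rw [h2, star_dot_self', star_dot_self']
    push_cast
    ring
  rw [key, Complex.zero_le_real, sub_nonneg]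
  calc ∑ i, Complex.normSq ((B *ᵥ x) i)
      ≤ ∑ i, (∑ j, Complex.normSq (B i j)) * (∑ j, Complex.normSq (x j)) := by
        refine Finset.sum_le_sum fun i _ => ?_
        have h3 : ‖(B *ᵥ x) i‖ ≤ ∑ j, ‖B i j‖ * ‖x j‖ := by
          simpa [mulVec, dotProduct, _root_.map_mul] using
            (norm_sum_le Finset.univ (fun j => B i j * x j) : _)
        have h4 : (∑ j, ‖B i j‖ * ‖x j‖) ^ 2
            ≤ (∑ j, ‖B i j‖ ^ 2) * (∑ j, ‖x j‖ ^ 2) :=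
          Finset.sum_mul_sq_le_sq_mul_sq _ _ _
        have h5 : Complex.normSq ((B *ᵥ x) i)
            ≤ (∑ j, ‖B i j‖ * ‖x j‖) ^ 2 := by
          rw [← Complex.sq_norm]
          exact pow_le_pow_left₀ (norm_nonneg _) h3 2
        simpa [Complex.sq_norm] using h5.trans h4
    _ = (∑ i, ∑ j, Complex.normSq (B i j)) * (∑ j, Complex.normSq (x j)) := by
        rw [Finset.sum_mul]
    _ = ∑ j, Complex.normSq (x j) := by rw [htrB, one_mul]

lemma psd_sum_conj {m n ι : Type*} [Fintype m] [Fintype n] [Fintype ι] (A : ι → Matrix m n ℂ)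
    {X : Matrix n n ℂ} (hX : X.PosSemidef) :
    (∑ t, A t * X * (A t)ᴴ).PosSemidef := by
  classical
  exact Finset.sum_induction _ _ (fun a b ha hb => ha.add hb) .zero
    (fun t _ => hX.mul_mul_conjTranspose_same (A t))

set_option maxHeartbeats 1000000 in
lemma isCP_kraus {ι κ T : Type*} [Fintype ι] [DecidableEq ι] [Fintype κ] [DecidableEq κ]
    [Fintype T] (V : T → Matrix κ ι ℂ) :
    IsCPfun (fun (X : Matrix ι ι ℂ) => ∑ t, V t * X * (V t)ᴴ) := by
  intro n X hX
  have key : (Matrix.of fun p q =>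
        (∑ t, V t * (Matrix.of fun i j => X (i, p.2) (j, q.2)) * (V t)ᴴ) p.1 q.1 :
        Matrix (κ × Fin n) (κ × Fin n) ℂ)
      = ∑ t, (Matrix.of fun (p : κ × Fin n) (q : ι × Fin n) =>
          V t p.1 q.1 * (if p.2 = q.2 then (1:ℂ) else 0)) * X *
          (Matrix.of fun (p : κ × Fin n) (q : ι × Fin n) =>
          V t p.1 q.1 * (if p.2 = q.2 then (1:ℂ) else 0))ᴴ := by
    ext p q
    simp only [Matrix.of_apply]
    rw [Matrix.sum_apply, Matrix.sum_apply]
    refine Finset.sum_congr rfl fun t _ => ?_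
    simp only [mul_apply, conjTranspose_apply, of_apply, Fintype.sum_prod_type,
      mul_ite, mul_one, mul_zero, ite_mul, zero_mul, apply_ite (star : ℂ → ℂ), star_one,
      star_zero, Finset.sum_ite_eq, Finset.sum_ite_eq', Finset.mem_univ, if_true, star_mul']
  rw [key]
  exact psd_sum_conj _ hX

lemma isTP_kraus {ι κ T : Type*} [Fintype ι] [DecidableEq ι] [Fintype κ]
    [Fintype T] (V : T → Matrix κ ι ℂ) (hV : ∑ t, (V t)ᴴ * V t = 1) :
    IsTPfun (fun (X : Matrix ι ι ℂ) => ∑ t, V t * X * (V t)ᴴ) := by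
  intro ρ
  rw [trace_sum]
  have h1 : ∀ t, (V t * ρ * (V t)ᴴ).trace = ((V t)ᴴ * V t * ρ).trace := fun t => by
    rw [trace_mul_cycle, Matrix.mul_assoc]
  simp_rw [h1]
  rw [← trace_sum, ← Finset.sum_mul, hV, Matrix.one_mul]

lemma sum_sum_ite_collapse {β n : Type*} [Fintype β] [Fintype n] [DecidableEq n]
    (x1 : n) (f : n → β → ℂ) :
    (∑ x4 : n, ∑ x5 : β, if x4 = x1 then f x4 x5 else 0) = ∑ x5, f x1 x5 := by
  rw [Finset.sum_comm]
  simp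

set_option maxHeartbeats 1000000 in
lemma selfCycle_kraus {σ τ : Type*} [Fintype σ] [DecidableEq σ] [Fintype τ] [DecidableEq τ]
    {a : ℕ} {T : Type*} [Fintype T]
    (V : T → Matrix (τ × Fin a) (σ × Fin a) ℂ) (ρ : Matrix σ σ ℂ) (s : τ) (t : τ) :
    selfCycleA (fun (X : Matrix (σ × Fin a) (σ × Fin a) ℂ) => ∑ m, V m * X * (V m)ᴴ) ρ s t
      = ∑ k, ∑ l, ∑ m, ∑ j, ∑ i,
          V m (s, k) (i, k) * ρ i j * star (V m (t, l) (j, l)) := by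
  simp only [selfCycleA, Matrix.of_apply, Matrix.sum_apply, mul_apply, conjTranspose_apply,
    Fintype.sum_prod_type, mul_ite, mul_one, mul_zero, ite_mul, zero_mul, ite_and,
    apply_ite (star : ℂ → ℂ), star_zero, map_sum, Finset.mul_sum, Finset.sum_mul,
    Finset.sum_ite_eq, Finset.sum_ite_eq', Finset.mem_univ, if_true]
  simp_rw [sum_sum_ite_collapse]

namespace Stmt13

def a0 {d1 : ℕ} (u v : Fin d1 ⊕ Fin d1) : ℂ := if u = v ∧ u.isLeft then 1 else 0
def a1 {d1 : ℕ} (u v : Fin d1 ⊕ Fin d1) : ℂ := if u = v ∧ u.isRight then 1 else 0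
def a10 {d1 : ℕ} (u v : Fin d1 ⊕ Fin d1) : ℂ := if u = v.swap ∧ u.isRight then 1 else 0
def a01 {d1 : ℕ} (u v : Fin d1 ⊕ Fin d1) : ℂ := if u = v.swap ∧ u.isLeft then 1 else 0

def eA (d1 : ℕ) : Fin (2 * d1) ≃ (Fin d1 ⊕ Fin d1) :=
  (finCongr (two_mul d1)).trans finSumFinEquiv.symm

variable {d1 : ℕ}

lemma sum_a0 (v w : Fin d1 ⊕ Fin d1) : (∑ u, a0 u v * a0 u w) = a0 v w := by
  rcases v with a | a <;> rcases w with b | b <;>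
    simp [a0, Fintype.sum_sum_type, ite_and, Finset.sum_ite_eq, apply_ite]
  all_goals (split <;> simp_all [eq_comm])
lemma sum_a10 (v w : Fin d1 ⊕ Fin d1) : (∑ u, a10 u v * a10 u w) = a0 v w := by
  rcases v with a | a <;> rcases w with b | b <;>
    simp [a0, a10, Fintype.sum_sum_type, ite_and, Finset.sum_ite_eq, apply_ite]
  all_goals (split <;> simp_all [eq_comm])
lemma sum_a01 (v w : Fin d1 ⊕ Fin d1) : (∑ u, a01 u v * a01 u w) = a1 v w := by
  rcases v with a | a <;> rcases w with b | b <;>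
    simp [a1, a01, Fintype.sum_sum_type, ite_and, Finset.sum_ite_eq, apply_ite]
  all_goals (split <;> simp_all [eq_comm])
lemma a0_add_a1 (v w : Fin d1 ⊕ Fin d1) : a0 v w + a1 v w = if v = w then 1 else 0 := by
  rcases v with a | a <;> rcases w with b | b <;> simp [a0, a1]
lemma sum_a0_diag : (∑ u : Fin d1 ⊕ Fin d1, a0 u u) = (d1 : ℂ) := by
  rw [Fintype.sum_sum_type]
  simp [a0, Finset.card_univ]
lemma a10_refl (u : Fin d1 ⊕ Fin d1) : a10 u u = 0 := by
  rcases u with a | a <;> simp [a10]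
lemma a01_refl (u : Fin d1 ⊕ Fin d1) : a01 u u = 0 := by
  rcases u with a | a <;> simp [a01]
lemma conj_a0 (v w : Fin d1 ⊕ Fin d1) : star (a0 v w) = a0 v w := by
  simp [a0, apply_ite (star : ℂ → ℂ)]
lemma conj_a10 (v w : Fin d1 ⊕ Fin d1) : star (a10 v w) = a10 v w := by
  simp [a10, apply_ite (star : ℂ → ℂ)]
lemma conj_a01 (v w : Fin d1 ⊕ Fin d1) : star (a01 v w) = a01 v w := by
  simp [a01, apply_ite (star : ℂ → ℂ)]

lemma sum_rot3 {α β γ : Type*} [Fintype α] [Fintype β] [Fintype γ] (f : α → β → γ → ℂ) :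
    (∑ a, ∑ b, ∑ c, f a b c) = ∑ c, ∑ a, ∑ b, f a b c := by
  have h1 : (∑ a, ∑ b, ∑ c, f a b c) = ∑ a, ∑ c, ∑ b, f a b c :=
    Finset.sum_congr rfl fun a _ => Finset.sum_comm
  rw [h1, Finset.sum_comm]

variable (d1 d2 : ℕ)

def V (S : Matrix (Fin d1 × Fin d2) (Fin d1 × Fin d2) ℂ)
    (H : Matrix (Fin d1) (Fin d1) ℂ) (z : Fin d2) :
    ((Fin d1 × Fin d2) ⊕ (Fin d1 ⊕ Fin d1)) →
      Matrix (Fin d2 × Fin (2 * d1)) (Fin d1 × Fin (2 * d1)) ℂ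
  | Sum.inl m => Matrix.of fun p q => S (q.1, p.1) m * a0 (eA d1 p.2) (eA d1 q.2)
  | Sum.inr (Sum.inl r) => Matrix.of fun p q =>
      (if p.1 = z then (starRingEnd ℂ) (H q.1 r) else 0) * a10 (eA d1 p.2) (eA d1 q.2)
  | Sum.inr (Sum.inr s0) => Matrix.of fun p q =>
      (if p.1 = z ∧ q.1 = s0 then 1 else 0) * a01 (eA d1 p.2) (eA d1 q.2)

set_option maxHeartbeats 2000000 in
lemma sumVV (S : Matrix (Fin d1 × Fin d2) (Fin d1 × Fin d2) ℂ)
    (H : Matrix (Fin d1) (Fin d1) ℂ) (z : Fin d2)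
    (P : Matrix (Fin d1 × Fin d2) (Fin d1 × Fin d2) ℂ)
    (hS : ∀ x y : Fin d1 × Fin d2, (∑ m, S x m * star (S y m)) = P x y)
    (hH : ∀ i j : Fin d1, (∑ r, H i r * star (H j r))
      = (if i = j then 1 else 0) - ∑ k, P (j, k) (i, k)) :
    ∑ t, (V d1 d2 S H z t)ᴴ * (V d1 d2 S H z t) = 1 := by
  ext x y
  rw [Matrix.sum_apply, Fintype.sum_sum_type, Fintype.sum_sum_type]
  simp only [mul_apply, conjTranspose_apply, V, Matrix.of_apply, Fintype.sum_prod_type]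
  have hg0 : (∑ k : Fin (2*d1), a0 (eA d1 k) (eA d1 x.2) * a0 (eA d1 k) (eA d1 y.2))
      = a0 (eA d1 x.2) (eA d1 y.2) := by
    rw [Equiv.sum_comp (eA d1) (fun u => a0 u (eA d1 x.2) * a0 u (eA d1 y.2)), sum_a0]
  have hg10 : (∑ k : Fin (2*d1), a10 (eA d1 k) (eA d1 x.2) * a10 (eA d1 k) (eA d1 y.2))
      = a0 (eA d1 x.2) (eA d1 y.2) := by
    rw [Equiv.sum_comp (eA d1) (fun u => a10 u (eA d1 x.2) * a10 u (eA d1 y.2)), sum_a10]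
  have hg01 : (∑ k : Fin (2*d1), a01 (eA d1 k) (eA d1 x.2) * a01 (eA d1 k) (eA d1 y.2))
      = a1 (eA d1 x.2) (eA d1 y.2) := by
    rw [Equiv.sum_comp (eA d1) (fun u => a01 u (eA d1 x.2) * a01 u (eA d1 y.2)), sum_a01]
  have K1 : (∑ m1 : Fin d1, ∑ m2 : Fin d2, ∑ s : Fin d2, ∑ k : Fin (2*d1),
        star (S (x.1, s) (m1, m2) * a0 (eA d1 k) (eA d1 x.2)) *
          (S (y.1, s) (m1, m2) * a0 (eA d1 k) (eA d1 y.2)))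
      = a0 (eA d1 x.2) (eA d1 y.2) * ∑ s, P (y.1, s) (x.1, s) := by
    have hterm : ∀ (m1 : Fin d1) (m2 : Fin d2) (s : Fin d2) (k : Fin (2*d1)),
        star (S (x.1, s) (m1, m2) * a0 (eA d1 k) (eA d1 x.2)) *
          (S (y.1, s) (m1, m2) * a0 (eA d1 k) (eA d1 y.2))
        = (S (y.1, s) (m1, m2) * star (S (x.1, s) (m1, m2))) *
            (a0 (eA d1 k) (eA d1 x.2) * a0 (eA d1 k) (eA d1 y.2)) := by
      intro m1 m2 s k
      rw [star_mul', conj_a0]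
      ring
    simp_rw [hterm, ← Finset.mul_sum, hg0, ← Finset.sum_mul]
    rw [mul_comm]
    congr 1
    rw [sum_rot3]
    refine Finset.sum_congr rfl fun s _ => ?_
    rw [← hS (y.1, s) (x.1, s), Fintype.sum_prod_type]
  have K2 : (∑ r : Fin d1, ∑ s : Fin d2, ∑ k : Fin (2*d1),
        star ((if s = z then (starRingEnd ℂ) (H x.1 r) else 0) * a10 (eA d1 k) (eA d1 x.2)) *
          ((if s = z then (starRingEnd ℂ) (H y.1 r) else 0) * a10 (eA d1 k) (eA d1 y.2)))
      = a0 (eA d1 x.2) (eA d1 y.2) *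
          ((if x.1 = y.1 then 1 else 0) - ∑ k, P (y.1, k) (x.1, k)) := by
    have hterm : ∀ (r : Fin d1) (s : Fin d2) (k : Fin (2*d1)),
        star ((if s = z then (starRingEnd ℂ) (H x.1 r) else 0) * a10 (eA d1 k) (eA d1 x.2)) *
          ((if s = z then (starRingEnd ℂ) (H y.1 r) else 0) * a10 (eA d1 k) (eA d1 y.2))
        = (if s = z then H x.1 r * star (H y.1 r) else 0) *
            (a10 (eA d1 k) (eA d1 x.2) * a10 (eA d1 k) (eA d1 y.2)) := by
      intro r s k
      rw [star_mul', conj_a10]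
      simp only [starRingEnd_apply, apply_ite (star : ℂ → ℂ), star_star, star_zero]
      split_ifs <;> ring
    simp_rw [hterm, ← Finset.mul_sum, hg10, ← Finset.sum_mul]
    rw [mul_comm]
    congr 1
    simp only [Finset.sum_ite_eq', Finset.mem_univ, if_true]
    simp_rw [← starRingEnd_apply]
    exact hH x.1 y.1
  have K3 : (∑ s0 : Fin d1, ∑ s : Fin d2, ∑ k : Fin (2*d1),
        star ((if s = z ∧ x.1 = s0 then 1 else 0) * a01 (eA d1 k) (eA d1 x.2)) *
          ((if s = z ∧ y.1 = s0 then 1 else 0) * a01 (eA d1 k) (eA d1 y.2)))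
      = a1 (eA d1 x.2) (eA d1 y.2) * (if x.1 = y.1 then 1 else 0) := by
    have hterm : ∀ (s0 : Fin d1) (s : Fin d2) (k : Fin (2*d1)),
        star ((if s = z ∧ x.1 = s0 then 1 else 0) * a01 (eA d1 k) (eA d1 x.2)) *
          ((if s = z ∧ y.1 = s0 then 1 else 0) * a01 (eA d1 k) (eA d1 y.2))
        = (if x.1 = s0 then 1 else 0) * ((if y.1 = s0 then 1 else 0) *
            ((if s = z then 1 else 0) *
              (a01 (eA d1 k) (eA d1 x.2) * a01 (eA d1 k) (eA d1 y.2)))) := by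
      intro s0 s k
      rw [star_mul', conj_a01]
      simp only [apply_ite (star : ℂ → ℂ), star_one, star_zero]
      by_cases hs : s = z <;> by_cases hx : x.1 = s0 <;> by_cases hy : y.1 = s0 <;>
        simp only [hs, hx, hy, true_and, false_and, and_true, and_false, if_true, if_false,
          ite_true, ite_false, one_mul, mul_one, zero_mul, mul_zero] <;> ring
    simp_rw [hterm, ← Finset.mul_sum, hg01]
    have hz : (∑ s : Fin d2, (if s = z then (1:ℂ) else 0) * a1 (eA d1 x.2) (eA d1 y.2))
        = a1 (eA d1 x.2) (eA d1 y.2) := by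
      rw [← Finset.sum_mul]
      simp
    simp_rw [hz]
    have hstep : ∀ s0 : Fin d1, (if x.1 = s0 then (1:ℂ) else 0) *
        ((if y.1 = s0 then 1 else 0) * a1 (eA d1 x.2) (eA d1 y.2))
        = if x.1 = s0 then (if y.1 = s0 then a1 (eA d1 x.2) (eA d1 y.2) else 0) else 0 := by
      intro s0
      split_ifs <;> ring
    simp_rw [hstep]
    simp only [Finset.sum_ite_eq, Finset.mem_univ, if_true]
    by_cases h : x.1 = y.1
    · simp [h]
    · rw [if_neg (fun hh => h hh.symm), mul_ite, mul_one, mul_zero, if_neg h]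
  rw [K1, K2, K3, one_apply]
  have hcomb : a0 (eA d1 x.2) (eA d1 y.2) * (∑ s, P (y.1, s) (x.1, s)) +
      (a0 (eA d1 x.2) (eA d1 y.2) * ((if x.1 = y.1 then 1 else 0) - ∑ k, P (y.1, k) (x.1, k)) +
        a1 (eA d1 x.2) (eA d1 y.2) * (if x.1 = y.1 then 1 else 0))
      = (a0 (eA d1 x.2) (eA d1 y.2) + a1 (eA d1 x.2) (eA d1 y.2)) *
          (if x.1 = y.1 then 1 else 0) := by
    ring
  rw [hcomb, a0_add_a1]
  have heq : (eA d1 x.2 = eA d1 y.2) ↔ x.2 = y.2 := Equiv.apply_eq_iff_eq _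
  split_ifs with h1 h2 h3 <;> simp_all [Prod.ext_iff]

end Stmt13

/-- for any density operator `P` on `H_{S₁} ⊗ H_{S₂}`, there exist an
ancilla of dimension `2·d₁`, a CPTP map `E : L(H_{S₁} ⊗ H_A) → L(H_{S₂} ⊗ H_A)` and
a constant `α > 0` such that `CJ⁻¹_{S₂|S₁}(P) = α · ⨆_A(E)`. -/
theorem stmt13 (d1 d2 : ℕ)
    (P : Matrix (Fin d1 × Fin d2) (Fin d1 × Fin d2) ℂ)
    (hP : P.PosSemidef) (htr : P.trace = 1) :
    ∃ (E : Matrix (Fin d1 × Fin (2 * d1)) (Fin d1 × Fin (2 * d1)) ℂ →ₗ[ℂ]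
           Matrix (Fin d2 × Fin (2 * d1)) (Fin d2 × Fin (2 * d1)) ℂ) (α : ℝ),
      IsCPfun ⇑E ∧ IsTPfun ⇑E ∧ 0 < α ∧
      ∀ ρ, CJinv P ρ = (α : ℂ) • selfCycleA (⇑E) ρ := by
  rcases Nat.eq_zero_or_pos d2 with hd2 | hd2
  · exfalso
    subst hd2
    rw [Matrix.trace] at htr
    simp at htr
  rcases Nat.eq_zero_or_pos d1 with hd1 | hd1
  · subst hd1
    refine ⟨0, 1, ?_, ?_, one_pos, ?_⟩
    · intro n X hX
      have h0 : (Matrix.of fun (p q : (Fin d2 × Fin (2 * 0)) × Fin n) =>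
          ((0 : Matrix (Fin 0 × Fin (2 * 0)) (Fin 0 × Fin (2 * 0)) ℂ →ₗ[ℂ]
            Matrix (Fin d2 × Fin (2 * 0)) (Fin d2 × Fin (2 * 0)) ℂ)
            (Matrix.of fun i j => X (i, p.2) (j, q.2))) p.1 q.1)
          = (0 : Matrix ((Fin d2 × Fin (2 * 0)) × Fin n)
              ((Fin d2 × Fin (2 * 0)) × Fin n) ℂ) := by
        ext p q
        simp
      rw [h0]
      exact Matrix.PosSemidef.zero
    · intro ρ
      simp [Matrix.trace]
    · intro ρ
      ext s t
      simp [CJinv, selfCycleA]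
  · -- main case
    set z : Fin d2 := ⟨0, hd2⟩ with hzdef
    have hSherm : (hP.sqrt)ᴴ = hP.sqrt := hP.posSemidef_sqrt.1
    have hS : ∀ x y : Fin d1 × Fin d2, (∑ m, hP.sqrt x m * star (hP.sqrt y m)) = P x y := by
      intro x y
      have h := congrFun (congrFun hP.sqrt_mul_self x) y
      rw [mul_apply] at h
      rw [← h]
      refine Finset.sum_congr rfl fun m _ => ?_
      congr 1
      calc star (hP.sqrt y m) = (hP.sqrt)ᴴ m y := by rw [conjTranspose_apply]
        _ = hP.sqrt m y := by rw [hSherm]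
    set Q0 : Matrix (Fin d1) (Fin d1) ℂ :=
      Matrix.of fun i j => ∑ k, P (j, k) (i, k) with hQ0def
    have hQ0herm : Q0.IsHermitian := by
      ext i j
      rw [conjTranspose_apply, hQ0def, Matrix.of_apply, Matrix.of_apply, star_sum]
      refine Finset.sum_congr rfl fun k _ => ?_
      have h := congrFun (congrFun hP.1 (j, k)) (i, k)
      rw [conjTranspose_apply] at h
      exact h
    have hQ0psd : Q0.PosSemidef := by
      refine .of_dotProduct_mulVec_nonneg hQ0herm fun x => ?_
      have hx : star x ⬝ᵥ Q0 *ᵥ x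
          = ∑ kk : Fin d2,
              star (fun p : Fin d1 × Fin d2 => if p.2 = kk then star (x p.1) else 0) ⬝ᵥ
                P *ᵥ (fun p : Fin d1 × Fin d2 => if p.2 = kk then star (x p.1) else 0) := by
        simp only [dotProduct, mulVec, Pi.star_apply, apply_ite (star : ℂ → ℂ), star_star,
          star_zero, hQ0def, Matrix.of_apply, Fintype.sum_prod_type, ite_mul, mul_ite,
          zero_mul, mul_zero, Finset.mul_sum, Finset.sum_mul, Finset.sum_ite_eq,
          Finset.sum_ite_eq', Finset.mem_univ, if_true]
        simp_rw [sum_sum_ite_collapse]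
        rw [Stmt13.sum_rot3]
        refine Finset.sum_congr rfl fun kk _ => ?_
        rw [Finset.sum_comm]
        refine Finset.sum_congr rfl fun j _ => Finset.sum_congr rfl fun i _ => ?_
        ring
      rw [hx]
      exact Finset.sum_nonneg fun kk _ => hP.dotProduct_mulVec_nonneg _
    have htrQ0 : Q0.trace = 1 := by
      rw [← htr]
      simp only [Matrix.trace, diag_apply, hQ0def, Matrix.of_apply, Fintype.sum_prod_type]
    have hGpsd : ((1 : Matrix (Fin d1) (Fin d1) ℂ) - Q0).PosSemidef :=
      one_sub_psd hQ0psd htrQ0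
    have hHherm : (hGpsd.sqrt)ᴴ = hGpsd.sqrt := hGpsd.posSemidef_sqrt.1
    have hH : ∀ i j : Fin d1, (∑ r, hGpsd.sqrt i r * star (hGpsd.sqrt j r))
        = (if i = j then 1 else 0) - ∑ k, P (j, k) (i, k) := by
      intro i j
      have h := congrFun (congrFun hGpsd.sqrt_mul_self i) j
      rw [mul_apply] at h
      have h2 : (∑ r, hGpsd.sqrt i r * star (hGpsd.sqrt j r))
          = ((1 : Matrix (Fin d1) (Fin d1) ℂ) - Q0) i j := by
        rw [← h]
        refine Finset.sum_congr rfl fun r _ => ?_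
        congr 1
        calc star (hGpsd.sqrt j r) = (hGpsd.sqrt)ᴴ r j := by rw [conjTranspose_apply]
          _ = hGpsd.sqrt r j := by rw [hHherm]
      rw [h2, Matrix.sub_apply, Matrix.one_apply, hQ0def, Matrix.of_apply]
    set Vf := Stmt13.V d1 d2 hP.sqrt hGpsd.sqrt z with hVfdef
    have hVV : ∑ t, (Vf t)ᴴ * (Vf t) = 1 := Stmt13.sumVV d1 d2 hP.sqrt hGpsd.sqrt z P hS hH
    refine ⟨{ toFun := fun X => ∑ t, Vf t * X * (Vf t)ᴴ
              map_add' := fun A B => by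
                simp [Matrix.mul_add, Matrix.add_mul, Finset.sum_add_distrib]
              map_smul' := fun c A => by
                simp [Matrix.mul_smul, Matrix.smul_mul, Finset.smul_sum] },
        (d1 : ℝ)⁻¹, isCP_kraus Vf, isTP_kraus Vf hVV,
        inv_pos.mpr (by exact_mod_cast hd1), ?_⟩
    intro ρ
    ext s t
    have hd1c : ((d1 : ℕ) : ℂ) ≠ 0 := Nat.cast_ne_zero.mpr hd1.ne'
    have hdiag : (∑ k : Fin (2 * d1), Stmt13.a0 (Stmt13.eA d1 k) (Stmt13.eA d1 k)) = (d1 : ℂ) := by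
      rw [Equiv.sum_comp (Stmt13.eA d1) (fun u => Stmt13.a0 u u), Stmt13.sum_a0_diag]
    have hsc := selfCycle_kraus Vf ρ s t
    have hcomp : (∑ k, ∑ l, ∑ m, ∑ j, ∑ i,
          Vf m (s, k) (i, k) * ρ i j * star (Vf m (t, l) (j, l)))
        = (d1 : ℂ) * ((d1 : ℂ) * (∑ i, ∑ j, ρ j i * P (j, s) (i, t))) := by
      have hterm : ∀ (k l : Fin (2 * d1)) (m1 : Fin d1) (m2 : Fin d2) (j i : Fin d1),
          (hP.sqrt (i, s) (m1, m2) * Stmt13.a0 (Stmt13.eA d1 k) (Stmt13.eA d1 k)) * ρ i j *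
            (star (hP.sqrt (j, t) (m1, m2)) * Stmt13.a0 (Stmt13.eA d1 l) (Stmt13.eA d1 l))
          = Stmt13.a0 (Stmt13.eA d1 k) (Stmt13.eA d1 k) *
              (Stmt13.a0 (Stmt13.eA d1 l) (Stmt13.eA d1 l) *
                (ρ i j * (hP.sqrt (i, s) (m1, m2) * star (hP.sqrt (j, t) (m1, m2))))) := by
        intro k l m1 m2 j i
        ring
      have hm : ∀ (j i : Fin d1),
          (∑ m1 : Fin d1, ∑ m2 : Fin d2,
            ρ i j * (hP.sqrt (i, s) (m1, m2) * star (hP.sqrt (j, t) (m1, m2))))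
          = ρ i j * P (i, s) (j, t) := by
        intro j i
        rw [← hS (i, s) (j, t), Finset.mul_sum, Fintype.sum_prod_type]
      simp only [hVfdef, Stmt13.V, Fintype.sum_sum_type, Fintype.sum_prod_type,
        Matrix.of_apply, Stmt13.a10_refl, Stmt13.a01_refl, mul_zero, zero_mul, star_zero,
        Finset.sum_const_zero, add_zero, star_mul', Stmt13.conj_a0]
      simp_rw [hterm, ← Finset.mul_sum]
      rw [← Finset.sum_mul, hdiag, ← Finset.sum_mul, hdiag]
      congr 1
      congr 1
      rw [Stmt13.sum_rot3]
      refine Finset.sum_congr rfl fun a _ => ?_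
      rw [Stmt13.sum_rot3]
      exact Finset.sum_congr rfl fun b _ => hm a b
    rw [CJinv, Matrix.of_apply, Matrix.smul_apply]
    have hEsc : selfCycleA
        (⇑({ toFun := fun X => ∑ t, Vf t * X * (Vf t)ᴴ,
             map_add' := fun A B => by
               simp [Matrix.mul_add, Matrix.add_mul, Finset.sum_add_distrib],
             map_smul' := fun c A => by
               simp [Matrix.mul_smul, Matrix.smul_mul, Finset.smul_sum] } :
          Matrix (Fin d1 × Fin (2 * d1)) (Fin d1 × Fin (2 * d1)) ℂ →ₗ[ℂ]
            Matrix (Fin d2 × Fin (2 * d1)) (Fin d2 × Fin (2 * d1)) ℂ)) ρ s t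
        = (d1 : ℂ) * ((d1 : ℂ) * (∑ i, ∑ j, ρ j i * P (j, s) (i, t))) := by
      rw [← hcomp]
      exact hsc
    rw [hEsc]
    push_cast
    field_simp
    rw [smul_eq_mul, one_div, pow_two, ← mul_assoc, ← mul_assoc, inv_mul_cancel₀ hd1c, one_mul]
end
end

section
/- Let ρ_P be the Choi-type total state of a causal model: ρ_P = α · ⨆_{A_V}(Ē)(|Φ⁺⟩⟨Φ⁺|_{E_in E'_in}) for a CPTP map Ē: L(H_{E_in} ⊗ H_{A_V}) → L(H_{E_out} ⊗ H_{A_V}), a constant α > 0, and |L⟩ = Σ_i |i⟩_{E_out}|i⟩_{E'_in}. Then for any unitary U on a subsystem of E_out and operators O_y on a disjoint subsystem of E_out with Σ_y O_y† O_y = 𝟙, the normalised quantity M(U, O_y) = ⟨L|(U ⊗ O_y) ρ_P (U† ⊗ O_y†)|L⟩ / Σ_{y'} ⟨L|(U ⊗ O_{y'}) ρ_P (U† ⊗ O_{y'}†)|L⟩ equals ⨆[(𝒰 ⊗ 𝒪_y) ∘ Ē] / Σ_{y'} ⨆[(𝒰 ⊗ 𝒪_{y'}) ∘ Ē], independently of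 α, whenever the denominator is nonzero; here 𝒰(·) = U(·)U† and 𝒪_y(·) = O_y(·)O_y†. -/
open scoped BigOperators Matrix Kronecker ComplexOrder
open Matrix

noncomputable section

section Stmt19

variable (na nb nr dA : ℕ)

/-- The edge system `E = (A × B) × R` of the causal model. -/
abbrev EIdx (na nb nr : ℕ) := (Fin na × Fin nb) × Fin nr

/-- The Choi-type total state
`ρ_P = α · (⨆_{A_V}(Ē) ⊗ I_{E'_in})(|Φ⁺⟩⟨Φ⁺|_{E_in E'_in})` on `E_out × E'_in`. -/
def rhoP (Ebar : Matrix (EIdx na nb nr × Fin dA) (EIdx na nb nr × Fin dA) ℂ →ₗ[ℂ]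
      Matrix (EIdx na nb nr × Fin dA) (EIdx na nb nr × Fin dA) ℂ) (α : ℝ) :
    Matrix (EIdx na nb nr × EIdx na nb nr) (EIdx na nb nr × EIdx na nb nr) ℂ :=
  Matrix.of fun p q =>
    (α : ℂ) * (((na * nb * nr : ℕ) : ℂ))⁻¹ *
      selfCycleA (⇑Ebar) (Matrix.single p.2 q.2 1) p.1 q.1

/-- `U ⊗ O_y ⊗ 𝟙_R ⊗ 𝟙_{E'_in}` acting on the `E_out` factor of the doubled space. -/
def Xop (U : Matrix (Fin na) (Fin na) ℂ) (O : Matrix (Fin nb) (Fin nb) ℂ) :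
    Matrix (EIdx na nb nr × EIdx na nb nr) (EIdx na nb nr × EIdx na nb nr) ℂ :=
  Matrix.of fun p q =>
    U p.1.1.1 q.1.1.1 * O p.1.1.2 q.1.1.2 * (if p.1.2 = q.1.2 then 1 else 0) *
      (if p.2 = q.2 then 1 else 0)

/-- `U ⊗ O_y ⊗ 𝟙_R ⊗ 𝟙_{A_V}` acting on the output of `Ē`. -/
def Wop (U : Matrix (Fin na) (Fin na) ℂ) (O : Matrix (Fin nb) (Fin nb) ℂ) :
    Matrix (EIdx na nb nr × Fin dA) (EIdx na nb nr × Fin dA) ℂ :=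
  Matrix.of fun p q =>
    U p.1.1.1 q.1.1.1 * O p.1.1.2 q.1.1.2 * (if p.1.2 = q.1.2 then 1 else 0) *
      (if p.2 = q.2 then 1 else 0)

/-- The link state `|L⟩ = Σ_i |i⟩_{E_out}|i⟩_{E'_in}`. -/
def linkL : EIdx na nb nr × EIdx na nb nr → ℂ := fun p => if p.1 = p.2 then 1 else 0

/-- The numerator `⟨L|(U ⊗ O_y) ρ_P (U† ⊗ O_y†)|L⟩`. -/
def numTN (Ebar : Matrix (EIdx na nb nr × Fin dA) (EIdx na nb nr × Fin dA) ℂ →ₗ[ℂ]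
      Matrix (EIdx na nb nr × Fin dA) (EIdx na nb nr × Fin dA) ℂ) (α : ℝ)
    (U : Matrix (Fin na) (Fin na) ℂ) (O : Matrix (Fin nb) (Fin nb) ℂ) : ℂ :=
  star (linkL na nb nr) ⬝ᵥ
    ((Xop na nb nr U O * rhoP na nb nr dA Ebar α * (Xop na nb nr U O)ᴴ).mulVec
      (linkL na nb nr))

/-- The full self-cycle `⨆[(𝒰 ⊗ 𝒪_y) ∘ Ē]` of the intervened causal model. -/
def scCM (Ebar : Matrix (EIdx na nb nr × Fin dA) (EIdx na nb nr × Fin dA) ℂ →ₗ[ℂ]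
      Matrix (EIdx na nb nr × Fin dA) (EIdx na nb nr × Fin dA) ℂ)
    (U : Matrix (Fin na) (Fin na) ℂ) (O : Matrix (Fin nb) (Fin nb) ℂ) : ℂ :=
  fullSC (fun X => Wop na nb nr dA U O * Ebar X * (Wop na nb nr dA U O)ᴴ)


section Aux
variable (na nb nr dA : ℕ)

lemma harg (p q : EIdx na nb nr) (k l : Fin dA) :
    (Matrix.of fun i j : EIdx na nb nr × Fin dA =>
      Matrix.single p q (1:ℂ) i.1 j.1 * (if i.2 = k ∧ j.2 = l then 1 else 0)) =
    Matrix.single (p,k) (q,l) (1:ℂ) := by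
  ext ⟨i1,i2⟩ ⟨j1,j2⟩
  simp [Matrix.single_apply, Prod.ext_iff, and_assoc, and_comm, and_left_comm]
  aesop

lemma Wsum (U : Matrix (Fin na) (Fin na) ℂ) (O : Matrix (Fin nb) (Fin nb) ℂ)
    (s : EIdx na nb nr × Fin dA) (f : EIdx na nb nr × Fin dA → ℂ) :
    ∑ x : EIdx na nb nr × Fin dA, Wop na nb nr dA U O s x * f x
      = ∑ i, ∑ j, U s.1.1.1 i * O s.1.1.2 j * f (((i,j),s.1.2), s.2) := by
  simp only [Fintype.sum_prod_type, Wop, Matrix.of_apply, mul_ite, ite_mul, zero_mul,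
    mul_zero, mul_one, one_mul, Finset.sum_ite_eq, Finset.sum_ite_eq', Finset.mem_univ,
    if_true]

lemma Wsum' (U : Matrix (Fin na) (Fin na) ℂ) (O : Matrix (Fin nb) (Fin nb) ℂ)
    (t : EIdx na nb nr × Fin dA) (f : EIdx na nb nr × Fin dA → ℂ) :
    ∑ x : EIdx na nb nr × Fin dA, f x * star (Wop na nb nr dA U O t x)
      = ∑ k, ∑ l, f (((k,l),t.1.2), t.2) * (star (U t.1.1.1 k) * star (O t.1.1.2 l)) := by
  simp only [Fintype.sum_prod_type, Wop, Matrix.of_apply, star_mul',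
    apply_ite (star : ℂ → ℂ), star_one, star_zero, mul_ite, ite_mul, zero_mul,
    mul_zero, mul_one, one_mul, Finset.sum_ite_eq, Finset.sum_ite_eq', Finset.mem_univ,
    if_true]

lemma linksum1 (f : EIdx na nb nr × EIdx na nb nr → ℂ) :
    ∑ x : EIdx na nb nr × EIdx na nb nr, star (linkL na nb nr x) * f x
      = ∑ a : EIdx na nb nr, f (a, a) := by
  simp only [Fintype.sum_prod_type, linkL, apply_ite (star : ℂ → ℂ), star_one, star_zero,
    ite_mul, zero_mul, one_mul, Finset.sum_ite_eq, Finset.mem_univ, if_true]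

lemma linksum2 (f : EIdx na nb nr × EIdx na nb nr → ℂ) :
    ∑ x : EIdx na nb nr × EIdx na nb nr, f x * linkL na nb nr x
      = ∑ b : EIdx na nb nr, f (b, b) := by
  simp only [Fintype.sum_prod_type, linkL, mul_ite, mul_zero, mul_one,
    Finset.sum_ite_eq, Finset.mem_univ, if_true]

lemma Xsum (U : Matrix (Fin na) (Fin na) ℂ) (O : Matrix (Fin nb) (Fin nb) ℂ)
    (a : EIdx na nb nr) (f : EIdx na nb nr × EIdx na nb nr → ℂ) :
    ∑ x : EIdx na nb nr × EIdx na nb nr, Xop na nb nr U O (a, a) x * f x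
      = ∑ i, ∑ j, U a.1.1 i * O a.1.2 j * f (((i,j),a.2), a) := by
  simp only [Fintype.sum_prod_type, Xop, Matrix.of_apply, mul_ite, ite_mul, zero_mul,
    mul_zero, mul_one, one_mul, Finset.sum_ite_eq, Finset.sum_ite_eq', Finset.mem_univ,
    if_true]

lemma Xsum' (U : Matrix (Fin na) (Fin na) ℂ) (O : Matrix (Fin nb) (Fin nb) ℂ)
    (b : EIdx na nb nr) (f : EIdx na nb nr × EIdx na nb nr → ℂ) :
    ∑ x : EIdx na nb nr × EIdx na nb nr, f x * star (Xop na nb nr U O (b, b) x)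
      = ∑ k, ∑ l, f (((k,l),b.2), b) * (star (U b.1.1 k) * star (O b.1.2 l)) := by
  simp only [Fintype.sum_prod_type, Xop, Matrix.of_apply, star_mul',
    apply_ite (star : ℂ → ℂ), star_one, star_zero, mul_ite, ite_mul, zero_mul,
    mul_zero, mul_one, one_mul, Finset.sum_ite_eq, Finset.sum_ite_eq', Finset.mem_univ,
    if_true]


def permE : (EIdx na nb nr × (Fin dA × (EIdx na nb nr × (Fin dA ×
      (Fin na × (Fin nb × (Fin na × Fin nb))))))) ≃
    (EIdx na nb nr × (EIdx na nb nr × (Fin na × (Fin nb × (Fin na × (Fin nb ×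
      (Fin dA × Fin dA))))))) where
  toFun x := (x.1, (x.2.2.1, (x.2.2.2.2.1, (x.2.2.2.2.2.1, (x.2.2.2.2.2.2.1,
    (x.2.2.2.2.2.2.2, (x.2.1, x.2.2.2.1)))))))
  invFun y := (y.1, (y.2.2.2.2.2.2.1, (y.2.1, (y.2.2.2.2.2.2.2, (y.2.2.1,
    (y.2.2.2.1, (y.2.2.2.2.1, y.2.2.2.2.2.1)))))))
  left_inv _ := rfl
  right_inv _ := rfl

lemma reorder (f : EIdx na nb nr → EIdx na nb nr → Fin na → Fin nb → Fin na → Fin nb →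
    Fin dA → Fin dA → ℂ) :
    (∑ a, ∑ b, ∑ k, ∑ l, ∑ i, ∑ j, ∑ m, ∑ n, f a b k l i j m n)
      = ∑ a, ∑ m, ∑ b, ∑ n, ∑ k, ∑ l, ∑ i, ∑ j, f a b k l i j m n := by
  calc (∑ a, ∑ b, ∑ k, ∑ l, ∑ i, ∑ j, ∑ m, ∑ n, f a b k l i j m n)
      = ∑ y : EIdx na nb nr × (EIdx na nb nr × (Fin na × (Fin nb × (Fin na × (Fin nb ×
            (Fin dA × Fin dA)))))),
          f y.1 y.2.1 y.2.2.1 y.2.2.2.1 y.2.2.2.2.1 y.2.2.2.2.2.1 y.2.2.2.2.2.2.1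
            y.2.2.2.2.2.2.2 := by
        simp only [Fintype.sum_prod_type]
    _ = ∑ x : EIdx na nb nr × (Fin dA × (EIdx na nb nr × (Fin dA ×
            (Fin na × (Fin nb × (Fin na × Fin nb)))))),
          f x.1 x.2.2.1 x.2.2.2.2.1 x.2.2.2.2.2.1 x.2.2.2.2.2.2.1 x.2.2.2.2.2.2.2
            x.2.1 x.2.2.2.1 :=
        (Fintype.sum_equiv (permE na nb nr dA) _ _ (fun x => rfl)).symm
    _ = ∑ a, ∑ m, ∑ b, ∑ n, ∑ k, ∑ l, ∑ i, ∑ j, f a b k l i j m n := by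
        simp only [Fintype.sum_prod_type]

lemma scCM_canon (Ebar : Matrix (EIdx na nb nr × Fin dA) (EIdx na nb nr × Fin dA) ℂ →ₗ[ℂ]
      Matrix (EIdx na nb nr × Fin dA) (EIdx na nb nr × Fin dA) ℂ)
    (U : Matrix (Fin na) (Fin na) ℂ) (O : Matrix (Fin nb) (Fin nb) ℂ) :
    scCM na nb nr dA Ebar U O =
      ∑ s : EIdx na nb nr × Fin dA, ∑ t : EIdx na nb nr × Fin dA,
        ∑ k, ∑ l, ∑ i, ∑ j,
          U s.1.1.1 i * O s.1.1.2 j * (star (U t.1.1.1 k) * star (O t.1.1.2 l)) *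
            Ebar (Matrix.single s t 1) (((i,j),s.1.2), s.2) (((k,l),t.1.2), t.2) := by
  unfold scCM fullSC
  refine Finset.sum_congr rfl fun s _ => Finset.sum_congr rfl fun t _ => ?_
  show (Wop na nb nr dA U O * Ebar (Matrix.single s t 1) * (Wop na nb nr dA U O)ᴴ) s t = _
  rw [Matrix.mul_apply]
  rw [show ∀ M : Matrix (EIdx na nb nr × Fin dA) (EIdx na nb nr × Fin dA) ℂ,
      ∑ x, (Wop na nb nr dA U O * M) s x * (Wop na nb nr dA U O)ᴴ x t
        = ∑ x, (Wop na nb nr dA U O * M) s x * star (Wop na nb nr dA U O t x)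
    from fun M => rfl]
  rw [Wsum']
  refine Finset.sum_congr rfl fun k _ => Finset.sum_congr rfl fun l _ => ?_
  rw [Matrix.mul_apply, Wsum]
  rw [Finset.sum_mul]
  refine Finset.sum_congr rfl fun i _ => ?_
  rw [Finset.sum_mul]
  refine Finset.sum_congr rfl fun j _ => ?_
  ring

lemma numTN_canon (Ebar : Matrix (EIdx na nb nr × Fin dA) (EIdx na nb nr × Fin dA) ℂ →ₗ[ℂ]
      Matrix (EIdx na nb nr × Fin dA) (EIdx na nb nr × Fin dA) ℂ) (α : ℝ)
    (U : Matrix (Fin na) (Fin na) ℂ) (O : Matrix (Fin nb) (Fin nb) ℂ) :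
    numTN na nb nr dA Ebar α U O =
      (α : ℂ) * (((na * nb * nr : ℕ) : ℂ))⁻¹ *
      ∑ a : EIdx na nb nr, ∑ b : EIdx na nb nr,
        ∑ k, ∑ l, ∑ i, ∑ j, ∑ m : Fin dA, ∑ n : Fin dA,
          U a.1.1 i * O a.1.2 j * (star (U b.1.1 k) * star (O b.1.2 l)) *
            Ebar (Matrix.single (a,m) (b,n) 1) (((i,j),a.2), m) (((k,l),b.2), n) := by
  unfold numTN
  simp only [dotProduct, Pi.star_apply, Matrix.mulVec]
  rw [linksum1]
  simp only [Finset.mul_sum]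
  refine Finset.sum_congr rfl fun a _ => ?_
  rw [linksum2]
  refine Finset.sum_congr rfl fun b _ => ?_
  rw [Matrix.mul_apply]
  rw [show ∀ M : Matrix (EIdx na nb nr × EIdx na nb nr) (EIdx na nb nr × EIdx na nb nr) ℂ,
      ∑ x, (Xop na nb nr U O * M) (a,a) x * (Xop na nb nr U O)ᴴ x (b,b)
        = ∑ x, (Xop na nb nr U O * M) (a,a) x * star (Xop na nb nr U O (b,b) x)
    from fun M => rfl]
  rw [Xsum']
  refine Finset.sum_congr rfl fun k _ => Finset.sum_congr rfl fun l _ => ?_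
  rw [Matrix.mul_apply, Xsum]
  rw [Finset.sum_mul]
  refine Finset.sum_congr rfl fun i _ => ?_
  rw [Finset.sum_mul]
  refine Finset.sum_congr rfl fun j _ => ?_
  show (U a.1.1 i * O a.1.2 j *
      rhoP na nb nr dA Ebar α (((i,j),a.2), a) (((k,l),b.2), b)) *
      (star (U b.1.1 k) * star (O b.1.2 l)) = _
  rw [show rhoP na nb nr dA Ebar α (((i,j),a.2), a) (((k,l),b.2), b)
      = (α : ℂ) * (((na * nb * nr : ℕ) : ℂ))⁻¹ *
        ∑ m : Fin dA, ∑ n : Fin dA,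
          Ebar (Matrix.single (a,m) (b,n) 1) (((i,j),a.2), m) (((k,l),b.2), n) by
    simp only [rhoP, Matrix.of_apply, selfCycleA, harg]]
  simp only [Finset.mul_sum, Finset.sum_mul]
  refine Finset.sum_congr rfl fun m _ => Finset.sum_congr rfl fun n _ => ?_
  ring

lemma key (Ebar : Matrix (EIdx na nb nr × Fin dA) (EIdx na nb nr × Fin dA) ℂ →ₗ[ℂ]
      Matrix (EIdx na nb nr × Fin dA) (EIdx na nb nr × Fin dA) ℂ) (α : ℝ)
    (U : Matrix (Fin na) (Fin na) ℂ) (O : Matrix (Fin nb) (Fin nb) ℂ) :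
    numTN na nb nr dA Ebar α U O =
      (α : ℂ) * (((na * nb * nr : ℕ) : ℂ))⁻¹ * scCM na nb nr dA Ebar U O := by
  rw [numTN_canon, scCM_canon]
  congr 1
  rw [reorder na nb nr dA (fun a b k l i j m n =>
    U a.1.1 i * O a.1.2 j * (star (U b.1.1 k) * star (O b.1.2 l)) *
      Ebar (Matrix.single (a,m) (b,n) 1) (((i,j),a.2), m) (((k,l),b.2), n))]
  conv_rhs => rw [Fintype.sum_prod_type]
  refine Finset.sum_congr rfl fun a _ => ?_
  refine Finset.sum_congr rfl fun m _ => ?_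
  conv_rhs => rw [Fintype.sum_prod_type]

end Aux

/-- for a CPTP map `Ē`, `α > 0`, a unitary `U` and a quantum instrument
`{O_y}` with `Σ_y O_y† O_y = 𝟙`, the normalised tensor-network correlation quantity
equals the normalised self-cycle quantity of the image causal model, independently of
`α`, whenever the denominator is nonzero. -/
theorem stmt19 (Y : Type) [Fintype Y]
    (Ebar : Matrix (EIdx na nb nr × Fin dA) (EIdx na nb nr × Fin dA) ℂ →ₗ[ℂ]
        Matrix (EIdx na nb nr × Fin dA) (EIdx na nb nr × Fin dA) ℂ)
    (hCP : IsCPfun ⇑Ebar) (hTP : IsTPfun ⇑Ebar)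
    (α : ℝ) (hα : 0 < α)
    (U : Matrix (Fin na) (Fin na) ℂ) (hU : U ∈ Matrix.unitaryGroup (Fin na) ℂ)
    (O : Y → Matrix (Fin nb) (Fin nb) ℂ) (hO : ∑ y, (O y)ᴴ * O y = 1)
    (y : Y)
    (hden : ∑ y', scCM na nb nr dA Ebar U (O y') ≠ 0) :
    numTN na nb nr dA Ebar α U (O y) / (∑ y', numTN na nb nr dA Ebar α U (O y')) =
      scCM na nb nr dA Ebar U (O y) / (∑ y', scCM na nb nr dA Ebar U (O y')) := by
  have hne : (na * nb * nr) ≠ 0 := by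
    intro h
    apply hden
    refine Finset.sum_eq_zero fun y' _ => ?_
    rcases Nat.mul_eq_zero.mp h with h' | h'
    · rcases Nat.mul_eq_zero.mp h' with h'' | h'' <;> subst h'' <;>
        simp [scCM, fullSC]
    · subst h'; simp [scCM, fullSC]
  have hc : ((α : ℂ) * (((na * nb * nr : ℕ) : ℂ))⁻¹) ≠ 0 :=
    mul_ne_zero (Complex.ofReal_ne_zero.mpr hα.ne')
      (inv_ne_zero (Nat.cast_ne_zero.mpr hne))
  simp only [key, ← Finset.mul_sum]
  rw [mul_div_mul_left _ _ hc]

end Stmt19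
end
end
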